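/- Let D be a triangulated category and ι : D' → D the inclusion of a full triangulated subcategory which admits a right adjoint ρ : D → D'. Let D'^⊥ denote the full subcategory of objects Y ∈ D with Hom_D(Z, Y) = 0 for all Z ∈ D'. Then: (1) for every X ∈ D, the cone of the counit ι ρ(X) → X lies in D'^⊥; and (2) the composite functor D'^⊥ ↪ D → D/D' is an equivalence of triangulated categories. -/

import Mathlib

open CategoryTheory Limits Pretriangulated Triangulated

section Aux

variable {D : Type*} [Category D] [Preadditive D] [HasZeroObject D] [HasShift D ℤ]
    [∀ n : ℤ, (shiftFunctor D n).Additive] [Pretriangulated D]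
    (S : ObjectProperty D) [S.IsTriangulated]
    (ρ : D ⥤ S.FullSubcategory)
    (adj : S.ι ⊣ ρ)

/-- Composition with the counit is bijective on morphisms out of objects of `S`. -/
lemma aux_counit_precomp_bijective {W : D} (hW : S W) (X : D) :
    Function.Bijective
      (fun g : W ⟶ (S.ι).obj (ρ.obj X) =>
        g ≫ adj.counit.app X) := by
  have h : (fun g : W ⟶ (S.ι).obj (ρ.obj X) =>
      g ≫ adj.counit.app X) =
      fun g => (adj.homEquiv ⟨W, hW⟩ X).symm (S.fullyFaithfulι.homEquiv.symm g) := by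
    funext g
    rw [Adjunction.homEquiv_counit]
    rfl
  rw [h]
  exact (adj.homEquiv ⟨W, hW⟩ X).symm.bijective.comp
    (S.fullyFaithfulι.homEquiv (X := ⟨W, hW⟩)).symm.bijective

/-- Part (1): the cone of the counit lies in the right orthogonal. -/
lemma aux_part1 (X Z : D) (g : X ⟶ Z)
    (w : Z ⟶ ((S.ι).obj (ρ.obj X))⟦(1 : ℤ)⟧)
    (hT : Triangle.mk (adj.counit.app X) g w ∈ distTriang D)
    (W : D) (hW : S W) (f : W ⟶ Z) : f = 0 := by
  -- Step 1 : f ≫ w = 0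
  have hu : (f ≫ w) ≫ (adj.counit.app X)⟦(1 : ℤ)⟧' = 0 := by
    have h := comp_distTriang_mor_zero₃₁ _ hT
    dsimp at h
    rw [Category.assoc, show w ≫ (adj.counit.app X)⟦(1 : ℤ)⟧' = 0 from h, Limits.comp_zero]
  have hfw : f ≫ w = 0 := by
    have e := shiftFunctorCompIsoId D (1 : ℤ) (-1 : ℤ) (by ring)
    have hnat := e.hom.naturality (adj.counit.app X)
    dsimp at hnat
    have h0 : ((f ≫ w)⟦(-1 : ℤ)⟧' ≫
        e.hom.app (ρ.obj X).obj) ≫ adj.counit.app X = 0 := by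
      rw [Category.assoc, ← hnat, ← Category.assoc, ← Functor.map_comp, hu,
        Functor.map_zero, Limits.zero_comp]
    have hinj := (aux_counit_precomp_bijective S ρ adj (S.le_shift (-1) W hW) X).1
    have h1 : (f ≫ w)⟦(-1 : ℤ)⟧' ≫
        e.hom.app (ρ.obj X).obj =
        (0 : W⟦(-1 : ℤ)⟧ ⟶ (S.ι).obj (ρ.obj X)) := by
      apply hinj
      simpa using h0
    have h2 : (f ≫ w)⟦(-1 : ℤ)⟧' = 0 := by
      rw [← cancel_mono (e.hom.app (ρ.obj X).obj)]
      simpa using h1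
    exact (shiftFunctor D (-1 : ℤ)).map_injective (by rw [h2, Functor.map_zero])
  -- Step 2 : f factors through X
  obtain ⟨k, hk⟩ := Triangle.coyoneda_exact₃ _ hT f hfw
  obtain ⟨k', hk'⟩ := (aux_counit_precomp_bijective S ρ adj hW X).2 k
  have hz := comp_distTriang_mor_zero₁₂ _ hT
  dsimp at hz hk
  rw [hk, ← hk']
  change (k' ≫ adj.counit.app X) ≫ g = 0
  rw [Category.assoc, show adj.counit.app X ≫ g = 0 from hz, Limits.comp_zero]

end Aux

/-- Let `ι : D' ⥤ D` be the inclusion of a full triangulated subcategory `S` admitting a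
right adjoint `ρ`.  Let `D'^⊥` be the right orthogonal of `D'`, i.e. the objects `Y` with
`Hom(Z, Y) = 0` for all `Z ∈ D'`.  Then (1) every cone of the counit `ι ρ X ⟶ X` lies in
`D'^⊥`, and (2) the composite `D'^⊥ ↪ D ⟶ D/D'` is an equivalence, where `D/D'` is
realized by any localization `L : D ⥤ E` of `D` at the class `S.trW` of morphisms whose
cone lies in `D'`. -/
theorem rightOrthogonal_equiv_verdier_quotient
    {D : Type*} [Category D] [Preadditive D] [HasZeroObject D] [HasShift D ℤ]
    [∀ n : ℤ, (shiftFunctor D n).Additive] [Pretriangulated D]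
    (S : ObjectProperty D) [S.IsTriangulated]
    (ρ : D ⥤ S.FullSubcategory)
    (adj : S.ι ⊣ ρ)
    {E : Type*} [Category E] (L : D ⥤ E) [L.IsLocalization S.trW] :
    (∀ (X Z : D) (g : X ⟶ Z)
      (w : Z ⟶ ((S.ι).obj (ρ.obj X))⟦(1 : ℤ)⟧),
      (Triangle.mk (adj.counit.app X) g w ∈ distTriang D) →
        ∀ (W : D), S W → ∀ f : W ⟶ Z, f = 0) ∧
    (ObjectProperty.ι (fun Y : D => ∀ (W : D), S W → ∀ f : W ⟶ Y, f = 0)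
      ⋙ L).IsEquivalence := by
  refine ⟨fun X Z g w hT => aux_part1 S ρ adj X Z g w hT, ?_⟩
  -- notation
  set P' : D → Prop := fun Y : D => ∀ (W : D), S W → ∀ f : W ⟶ Y, f = 0 with hP'
  set jB := ObjectProperty.ι P' with hjB
  -- choose cones of counits
  have hcone : ∀ X : D, ∃ (Z : D) (g : X ⟶ Z)
      (w : Z ⟶ ((S.ι).obj (ρ.obj X))⟦(1 : ℤ)⟧),
      Triangle.mk (adj.counit.app X) g w ∈ distTriang D := fun X =>
    distinguished_cocone_triangle (adj.counit.app X)
  choose Zo gm wm hdist using hcone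
  have hZo : ∀ X : D, P' (Zo X) := fun X => aux_part1 S ρ adj X _ (gm X) (wm X) (hdist X)
  -- the left adjoint to the inclusion of the right orthogonal
  let Fobj : D → ObjectProperty.FullSubcategory P' := fun X => ⟨Zo X, hZo X⟩
  have hbij : ∀ (X : D) (Y : ObjectProperty.FullSubcategory P'),
      Function.Bijective (fun φ : Fobj X ⟶ Y => gm X ≫ φ.hom) := by
    intro X Y
    constructor
    · intro φ φ' h
      replace h : gm X ≫ φ.hom = gm X ≫ φ'.hom := h
      have h0 : gm X ≫ (φ.hom - φ'.hom) = 0 := by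
        rw [Preadditive.comp_sub, h, sub_self]
      obtain ⟨ψ, hψ⟩ := Triangle.yoneda_exact₃ _ (hdist X) (φ.hom - φ'.hom) h0
      rw [Y.property _ (S.le_shift 1 _ (ρ.obj X).property) ψ] at hψ
      exact ObjectProperty.hom_ext _ (sub_eq_zero.1 (hψ.trans Limits.comp_zero))
    · intro f
      have h0 : adj.counit.app X ≫ f = 0 :=
        Y.property _ (ρ.obj X).property _
      obtain ⟨φ, hφ⟩ := Triangle.yoneda_exact₂ _ (hdist X) f h0
      exact ⟨ObjectProperty.homMk φ, hφ.symm⟩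
  let eqv : ∀ (X : D) (Y : ObjectProperty.FullSubcategory P'), (Fobj X ⟶ Y) ≃ (X ⟶ jB.obj Y) :=
    fun X Y => Equiv.ofBijective _ (hbij X Y)
  have he : ∀ (X : D) (Y Y' : ObjectProperty.FullSubcategory P') (g' : Y ⟶ Y') (h : Fobj X ⟶ Y),
      eqv X Y' (h ≫ g') = eqv X Y h ≫ jB.map g' := fun X Y Y' g' h =>
    (Category.assoc _ _ _).symm
  let lam : D ⥤ ObjectProperty.FullSubcategory P' := Adjunction.leftAdjointOfEquiv eqv he
  let adjL : lam ⊣ jB := Adjunction.adjunctionOfEquivLeft eqv he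
  -- the unit is the projection to the cone
  have hunit : ∀ X : D, adjL.unit.app X = gm X ≫ 𝟙 _ := by
    intro X
    rfl
  -- unit components are in S.trW
  have hWunit : ∀ X : D, S.trW (adjL.unit.app X) := by
    intro X
    have : S.trW (gm X) := ObjectProperty.trW.mk' (P := S) (hdist X) (ρ.obj X).property
    rw [hunit]
    simpa using this
  -- lam inverts S.trW
  have hinv : S.trW.IsInvertedBy lam := by
    intro X Y f hf
    obtain ⟨Z, g', w', hT, hZ⟩ := hf
    apply isIso_of_coyoneda_map_bijective
    intro T
    have hmid : Function.Bijective (fun s : Y ⟶ jB.obj T => f ≫ s) := by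
      constructor
      · intro s s' h
        replace h : f ≫ s = f ≫ s' := h
        have h0 : f ≫ (s - s') = 0 := by
          rw [Preadditive.comp_sub, h, sub_self]
        obtain ⟨v, hv⟩ := Triangle.yoneda_exact₂ _ hT (s - s') h0
        rw [T.property _ hZ v] at hv
        exact sub_eq_zero.1 (hv.trans Limits.comp_zero)
      · intro s
        have h0 : (Triangle.mk f g' w').invRotate.mor₁ ≫ s = 0 :=
          T.property _ (S.le_shift (-1) _ hZ) _
        obtain ⟨u, hu⟩ := Triangle.yoneda_exact₂ _ (inv_rot_of_distTriang _ hT) s h0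
        exact ⟨u, hu.symm⟩
    have key : (fun x : lam.obj Y ⟶ T => lam.map f ≫ x) =
        (adjL.homEquiv X T).symm ∘ (fun s : Y ⟶ jB.obj T => f ≫ s) ∘ (adjL.homEquiv Y T) := by
      funext x
      dsimp
      rw [← Adjunction.homEquiv_naturality_left, Equiv.symm_apply_apply]
    rw [key]
    exact ((adjL.homEquiv X T).symm.bijective.comp hmid).comp (adjL.homEquiv Y T).bijective
  -- the inverse functor
  let G : E ⥤ ObjectProperty.FullSubcategory P' := Localization.lift lam hinv L
  have fac : L ⋙ G ≅ lam := Localization.fac lam hinv L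
  -- counit of adjL is an isomorphism
  haveI : IsIso adjL.counit := adjL.counit_isIso_of_R_fully_faithful
  -- iso1 : (jB ⋙ L) ⋙ G ≅ 𝟭
  let iso1 : (jB ⋙ L) ⋙ G ≅ 𝟭 (ObjectProperty.FullSubcategory P') :=
    Functor.associator _ _ _ ≪≫ Functor.isoWhiskerLeft jB fac ≪≫ asIso adjL.counit
  -- iso2 : G ⋙ (jB ⋙ L) ≅ 𝟭 E
  haveI : ∀ X : D, IsIso ((Functor.whiskerRight adjL.unit L).app X) := by
    intro X
    exact Localization.inverts L S.trW _ (hWunit X)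
  haveI : IsIso (Functor.whiskerRight adjL.unit L) := NatIso.isIso_of_isIso_app _
  let e' : lam ⋙ (jB ⋙ L) ≅ L :=
    (Functor.associator _ _ _).symm ≪≫ (asIso (Functor.whiskerRight adjL.unit L)).symm ≪≫
      Functor.leftUnitor L
  letI : Localization.Lifting L S.trW (lam ⋙ (jB ⋙ L)) (G ⋙ (jB ⋙ L)) :=
    ⟨(Functor.associator _ _ _).symm ≪≫ Functor.isoWhiskerRight fac (jB ⋙ L)⟩
  let iso2 : G ⋙ (jB ⋙ L) ≅ 𝟭 E :=
    Localization.liftNatIso L S.trW (lam ⋙ (jB ⋙ L)) L (G ⋙ (jB ⋙ L)) (𝟭 E) e'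
  exact (CategoryTheory.Equivalence.mk (jB ⋙ L) G iso1.symm iso2).isEquivalence_functor
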